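/- Decomposition bound for conditional mean deviations: with d_{a,R}(x) = (R - x)/(R - a) * 1{a < x < R}, the deviation between empirical and population conditional means satisfies |hat-mu_{a,R} - mu_{a,R}| <= |P_n d_{a,R} - P d_{a,R}| * (R-a)/P(a,R) + |P_n(a,R) - P(a,R)| * (R - hat-mu_{a,R})/P(a,R), provided P_n(a,R) > 0 and P(a,R) > 0. -/

import Mathlib

open MeasureTheory
open scoped ENNReal

/-- Decomposition bound for conditional mean deviations: with
`d_{a,R}(x) = (R-x)/(R-a) 𝟙{a<x<R}` and `h_{a,R}(x) = x 𝟙{a<x<R}`,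
`|μ̂_{a,R} - μ_{a,R}| ≤ |Pₙd - Pd| (R-a)/P(a,R) + |Pₙ(a,R) - P(a,R)| (R-μ̂)/P(a,R)`. -/
lemma bdd_integrable (μ : Measure ℝ) [IsFiniteMeasure μ] (f : ℝ → ℝ) (C : ℝ)
    (hm : Measurable f) (hb : ∀ t, ‖f t‖ ≤ C) : Integrable f μ :=
  (integrable_const C).mono' hm.aestronglyMeasurable (Filter.Eventually.of_forall hb)

lemma key_identity (μ : Measure ℝ) [IsFiniteMeasure μ] (a R : ℝ) (haR : a < R)
    (hIntd : Integrable
      (fun t => (R - t) / (R - a) * Set.indicator (Set.Ioo a R) (fun _ => (1:ℝ)) t) μ) :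
    (∫ t, t * Set.indicator (Set.Ioo a R) (fun _ => (1:ℝ)) t ∂μ) =
      R * (μ (Set.Ioo a R)).toReal -
        (R - a) * ∫ t, (R - t) / (R - a) * Set.indicator (Set.Ioo a R) (fun _ => (1:ℝ)) t ∂μ := by
  have hRa : R - a ≠ 0 := sub_ne_zero.mpr haR.ne'
  have hind : Integrable (fun t => Set.indicator (Set.Ioo a R) (fun _ => (1:ℝ)) t) μ :=
    (integrable_const (1:ℝ)).indicator measurableSet_Ioo
  have hfe : (fun t => t * Set.indicator (Set.Ioo a R) (fun _ => (1:ℝ)) t) =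
      fun t => R * Set.indicator (Set.Ioo a R) (fun _ => (1:ℝ)) t -
        (R - a) * ((R - t) / (R - a) * Set.indicator (Set.Ioo a R) (fun _ => (1:ℝ)) t) := by
    funext t
    by_cases ht : t ∈ Set.Ioo a R
    · simp only [Set.indicator_of_mem ht]
      field_simp
      ring
    · simp [Set.indicator_of_notMem ht]
  rw [hfe, integral_sub (hind.const_mul R) (hIntd.const_mul (R - a)),
    MeasureTheory.integral_const_mul, MeasureTheory.integral_const_mul]
  congr 1
  rw [MeasureTheory.integral_indicator_const (1:ℝ) measurableSet_Ioo]; simp [Measure.real]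

theorem conditional_mean_decomposition_bound
    (P : Measure ℝ) [IsProbabilityMeasure P] (n : ℕ) (hn : 1 ≤ n) (x : Fin n → ℝ)
    (Pn : Measure ℝ)
    (hPn : Pn = ((n : ℝ≥0∞))⁻¹ • ∑ i, Measure.dirac (x i))
    (a R : ℝ) (haR : a < R)
    (hP : 0 < (P (Set.Ioo a R)).toReal) (hPn' : 0 < (Pn (Set.Ioo a R)).toReal)
    (hInt : Integrable (fun t => t * Set.indicator (Set.Ioo a R) (fun _ => (1:ℝ)) t) P)
    (hIntd : Integrable
      (fun t => (R - t) / (R - a) * Set.indicator (Set.Ioo a R) (fun _ => (1:ℝ)) t) P) :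
    |(∫ t, t * Set.indicator (Set.Ioo a R) (fun _ => (1:ℝ)) t ∂Pn) /
        (Pn (Set.Ioo a R)).toReal -
      (∫ t, t * Set.indicator (Set.Ioo a R) (fun _ => (1:ℝ)) t ∂P) /
        (P (Set.Ioo a R)).toReal| ≤
      |(∫ t, (R - t) / (R - a) * Set.indicator (Set.Ioo a R) (fun _ => (1:ℝ)) t ∂Pn) -
        (∫ t, (R - t) / (R - a) * Set.indicator (Set.Ioo a R) (fun _ => (1:ℝ)) t ∂P)| *
        ((R - a) / (P (Set.Ioo a R)).toReal) +
      |(Pn (Set.Ioo a R)).toReal - (P (Set.Ioo a R)).toReal| *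
        ((R - (∫ t, t * Set.indicator (Set.Ioo a R) (fun _ => (1:ℝ)) t ∂Pn) /
            (Pn (Set.Ioo a R)).toReal) / (P (Set.Ioo a R)).toReal) := by
  have hRa : (0:ℝ) < R - a := sub_pos.mpr haR
  -- Pn is a probability measure
  have hPnProb : IsProbabilityMeasure Pn := by
    constructor
    rw [hPn]
    simp only [Measure.smul_apply, Measure.coe_finset_sum, Finset.sum_apply,
      Measure.dirac_apply_of_mem (Set.mem_univ _), smul_eq_mul]
    rw [Finset.sum_const, Finset.card_univ, Fintype.card_fin, nsmul_eq_mul, mul_one]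
    exact ENNReal.inv_mul_cancel (by exact_mod_cast Nat.one_le_iff_ne_zero.mp hn)
      (ENNReal.natCast_ne_top n)
  -- integrability under Pn
  have hIntPn : Integrable (fun t => t * Set.indicator (Set.Ioo a R) (fun _ => (1:ℝ)) t) Pn := by
    apply bdd_integrable Pn _ (|a| + |R|)
    · exact measurable_id.mul (measurable_const.indicator measurableSet_Ioo)
    · intro t
      by_cases ht : t ∈ Set.Ioo a R
      · simp only [Set.indicator_of_mem ht, mul_one, Real.norm_eq_abs]
        rcases ht with ⟨h1, h2⟩
        rw [abs_le]
        constructor <;> [nlinarith [neg_abs_le a, le_abs_self R, abs_nonneg a, abs_nonneg R];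
          nlinarith [neg_abs_le a, le_abs_self R, abs_nonneg a, abs_nonneg R]]
      · simp [Set.indicator_of_notMem ht, add_nonneg (abs_nonneg a) (abs_nonneg R)]
  have hIntdPn : Integrable
      (fun t => (R - t) / (R - a) * Set.indicator (Set.Ioo a R) (fun _ => (1:ℝ)) t) Pn := by
    apply bdd_integrable Pn _ 1
    · exact ((measurable_const.sub measurable_id).div_const (R - a)).mul
        (measurable_const.indicator measurableSet_Ioo)
    · intro t
      by_cases ht : t ∈ Set.Ioo a R
      · simp only [Set.indicator_of_mem ht, mul_one, Real.norm_eq_abs]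
        rcases ht with ⟨h1, h2⟩
        rw [abs_div, abs_of_pos (by linarith : (0:ℝ) < R - t), abs_of_pos hRa,
          div_le_one hRa]
        linarith
      · simp [Set.indicator_of_notMem ht]
  -- nonnegativity of d-integral under Pn
  have hdnn : (0:ℝ) ≤ ∫ t, (R - t) / (R - a) * Set.indicator (Set.Ioo a R) (fun _ => (1:ℝ)) t ∂Pn := by
    apply integral_nonneg
    intro t
    by_cases ht : t ∈ Set.Ioo a R
    · simp only [Set.indicator_of_mem ht, mul_one]
      exact div_nonneg (by linarith [ht.2] : (0:ℝ) ≤ R - t) hRa.le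
    · simp [Set.indicator_of_notMem ht]
  set p := (P (Set.Ioo a R)).toReal with hp
  set pn := (Pn (Set.Ioo a R)).toReal with hpn
  set D := ∫ t, (R - t) / (R - a) * Set.indicator (Set.Ioo a R) (fun _ => (1:ℝ)) t ∂P with hD
  set Dn := ∫ t, (R - t) / (R - a) * Set.indicator (Set.Ioo a R) (fun _ => (1:ℝ)) t ∂Pn with hDn
  have hH : (∫ t, t * Set.indicator (Set.Ioo a R) (fun _ => (1:ℝ)) t ∂P) = R * p - (R - a) * D :=
    key_identity P a R haR hIntd
  have hHn : (∫ t, t * Set.indicator (Set.Ioo a R) (fun _ => (1:ℝ)) t ∂Pn) = R * pn - (R - a) * Dn :=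
    key_identity Pn a R haR hIntdPn
  rw [hH, hHn]
  have hp0 : p ≠ 0 := ne_of_gt hP
  have hpn0 : pn ≠ 0 := ne_of_gt hPn'
  have hEq : (R * pn - (R - a) * Dn) / pn - (R * p - (R - a) * D) / p =
      (R - a) * (D - Dn) / p + (pn - p) * (((R - a) * Dn / pn) / p) := by
    field_simp
    ring
  have hEq2 : R - (R * pn - (R - a) * Dn) / pn = (R - a) * Dn / pn := by
    field_simp
    ring
  rw [hEq, hEq2]
  calc |(R - a) * (D - Dn) / p + (pn - p) * ((R - a) * Dn / pn / p)|
      ≤ |(R - a) * (D - Dn) / p| + |(pn - p) * ((R - a) * Dn / pn / p)| := abs_add_le _ _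
    _ = |Dn - D| * ((R - a) / p) + |pn - p| * ((R - a) * Dn / pn / p) := by
        rw [abs_mul, abs_div, abs_mul, abs_of_pos hRa, abs_of_pos hP,
          abs_of_nonneg (div_nonneg (div_nonneg (mul_nonneg hRa.le hdnn) hPn'.le) hP.le),
          abs_sub_comm D Dn]
        ring
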